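/- Let n ≥ 1, B an n×n symmetric positive definite matrix, s : ℝⁿ → ℝⁿ decreasing in the monotone-operator sense (⟨s(p) − s(q), p − q⟩ ≤ 0 for all p, q), and p* ∈ ℝⁿ with B·s(p*) = p*. Then for every p ≠ p*, ⟨B⁻¹(p − p*), B·s(p) − p⟩ < 0. -/

import Mathlib

open Matrix

/-- Lyapunov-derivative inequality for Theorem 2, case 1 (quadratic aggregate cost):
if `B` is symmetric positive definite, `s` is decreasing in the monotone-operator sense,
and `B·s(p*) = p*`, then for every `p ≠ p*` the time derivative of
`V(p) = ½(p - p*)ᵀB⁻¹(p - p*)` along `ṗ = B·s(p) - p`, namely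
`⟨B⁻¹(p - p*), B·s(p) - p⟩`, is negative. -/
theorem lyapunov_derivative_neg_quadratic
    (n : ℕ) (hn : 1 ≤ n)
    (B : Matrix (Fin n) (Fin n) ℝ) (hBsymm : B.IsSymm) (hBpos : B.PosDef)
    (s : (Fin n → ℝ) → (Fin n → ℝ))
    (hdec : ∀ p q : Fin n → ℝ, (s p - s q) ⬝ᵥ (p - q) ≤ 0)
    (pstar : Fin n → ℝ) (hfix : B.mulVec (s pstar) = pstar) :
    ∀ p : Fin n → ℝ, p ≠ pstar →
      (B⁻¹.mulVec (p - pstar)) ⬝ᵥ (B.mulVec (s p) - p) < 0 := by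
  intro p hp
  set d := p - pstar with hd_def
  set u := s p - s pstar with hu_def
  have hd : d ≠ 0 := sub_ne_zero.mpr hp
  have hdet : IsUnit B.det := isUnit_iff_ne_zero.mpr (ne_of_gt hBpos.det_pos)
  have hsplit : B.mulVec (s p) - p = B.mulVec u - d := by
    rw [hu_def, Matrix.mulVec_sub, hfix, hd_def]
    abel
  rw [hsplit, dotProduct_sub]
  -- first term: (B⁻¹ d) ⬝ (B u) = d ⬝ u ≤ 0
  have h1 : (B⁻¹.mulVec d) ⬝ᵥ (B.mulVec u) = u ⬝ᵥ d := by
    rw [Matrix.dotProduct_mulVec]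
    have : B.vecMul (B⁻¹.mulVec d) = d := by
      rw [← hBsymm.eq, Matrix.vecMul_transpose, Matrix.mulVec_mulVec,
        hBsymm.eq, Matrix.mul_nonsing_inv _ hdet, Matrix.one_mulVec]
    rw [this, dotProduct_comm]
  have h1le : (B⁻¹.mulVec d) ⬝ᵥ (B.mulVec u) ≤ 0 := by
    rw [h1]; exact hdec p pstar
  -- second term: (B⁻¹ d) ⬝ d > 0
  have hBi : (B⁻¹).PosDef := hBpos.inv
  have h2 : 0 < (B⁻¹.mulVec d) ⬝ᵥ d := by
    have := hBi.dotProduct_mulVec_pos hd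
    simpa [dotProduct_comm] using this
  linarith
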